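/- If the interval [σ,π] in the permutation pattern poset is single, then μ(σ,π) = (−1)^{|π|−|σ|}·NE(σ,π). -/

import Mathlib

open scoped Classical

set_option maxHeartbeats 1000000

/-! ## The permutation pattern poset -/

/-- The type of all (finite) permutations: a permutation of length `n` is an element of
`Equiv.Perm (Fin n)`; the letter in position `i` is `p.2 i` (letters compared via the
order on `Fin n`). -/
abbrev PermPat : Type := Σ n : ℕ, Equiv.Perm (Fin n)

/-- Pattern containment: `PatLe σ π` iff `π` has a subsequence in the same relative order
as `σ`, i.e. there is an occurrence of `σ` in `π`. -/
def PatLe (p q : PermPat) : Prop :=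
  ∃ f : Fin p.1 ↪o Fin q.1, ∀ i j : Fin p.1, p.2 i < p.2 j ↔ q.2 (f i) < q.2 (f j)

lemma patLe_refl (p : PermPat) : PatLe p p := by
  refine ⟨(OrderIso.refl (Fin p.1)).toOrderEmbedding, fun i j => ?_⟩
  simp

lemma patLe_trans {p q r : PermPat} (h1 : PatLe p q) (h2 : PatLe q r) : PatLe p r := by
  obtain ⟨f, hf⟩ := h1
  obtain ⟨g, hg⟩ := h2
  exact ⟨f.trans g, fun i j => (hf i j).trans (hg (f i) (f j))⟩

lemma PatLe.len_le {p q : PermPat} (h : PatLe p q) : p.1 ≤ q.1 := by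
  obtain ⟨f, -⟩ := h
  simpa using Fintype.card_le_of_embedding f.toEmbedding

lemma StrictMono.fin_apply_eq {n : ℕ} {f : Fin n → Fin n} (hf : StrictMono f) (i : Fin n) :
    f i = i := by
  have hle : ∀ m : ℕ, ∀ j : Fin n, j.val = m → j.val ≤ (f j).val := by
    intro m
    induction m with
    | zero => intro j hj; omega
    | succ m ih =>
      intro j hj
      have hm : m < n := by omega
      have h1 : f ⟨m, hm⟩ < f j := hf (by simp [Fin.lt_def]; omega)
      have h2 := ih ⟨m, hm⟩ rfl
      simp only [Fin.lt_def] at h1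
      simp only [Fin.val_mk] at h1 h2
      omega
  have hge : ∀ m : ℕ, ∀ j : Fin n, j.val + m + 1 = n → (f j).val ≤ j.val := by
    intro m
    induction m with
    | zero => intro j hj; have := (f j).isLt; omega
    | succ m ih =>
      intro j hj
      have hs : j.val + 1 < n := by omega
      have h1 : f j < f ⟨j.val + 1, hs⟩ := hf (by simp [Fin.lt_def])
      have h2 := ih ⟨j.val + 1, hs⟩ (by simp only [Fin.val_mk]; omega)
      simp only [Fin.lt_def] at h1
      simp only [Fin.val_mk] at h1 h2
      omega
  exact Fin.ext (le_antisymm (hge (n - 1 - i.val) i (by have := i.isLt; omega)) (hle i.val i rfl))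

lemma patLe_antisymm {p q : PermPat} (hpq : PatLe p q) (hqp : PatLe q p) : p = q := by
  obtain ⟨k, σ⟩ := p
  obtain ⟨n, π⟩ := q
  have hkn : k = n := le_antisymm hpq.len_le hqp.len_le
  subst hkn
  obtain ⟨f, hf⟩ := hpq
  have hfid : ∀ i, f i = i := fun i => f.strictMono.fin_apply_eq i
  have key : ∀ i j : Fin k, σ i < σ j ↔ π i < π j := by
    intro i j
    simpa [hfid] using hf i j
  have hmono : StrictMono (fun a => π (σ.symm a)) := by
    intro a b hab
    have : σ (σ.symm a) < σ (σ.symm b) := by simpa using hab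
    exact (key _ _).mp this
  have hid : ∀ a, π (σ.symm a) = a := fun a => hmono.fin_apply_eq a
  have hσπ : σ = π := by
    apply Equiv.ext
    intro x
    have := hid (σ x)
    simpa using this.symm
  rw [hσπ]

/-- The permutation pattern poset `𝒫`. -/
instance : PartialOrder PermPat where
  le := PatLe
  le_refl := patLe_refl
  le_trans _ _ _ := patLe_trans
  le_antisymm _ _ := patLe_antisymm

lemma PermPat.le_def {p q : PermPat} : p ≤ q ↔ PatLe p q := Iff.rfl

/-! ## The Möbius function of the pattern poset

`permMu` is the Möbius function of the pattern poset: `μ(σ,σ) = 1`,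
`μ(σ,π) = -∑_{σ ≤ z < π} μ(σ,z)` for `σ < π`, and `μ(σ,π) = 0` if `σ ≰ π`.
(Every `z < π` is of length strictly smaller than `π`, so the inner sum ranges over
the permutations of each length `m < |π|`.) -/
noncomputable def permMu (p q : PermPat) : ℤ :=
  if p = q then 1
  else if PatLe p q then
    - ∑ m : Fin q.1, ∑ z : Equiv.Perm (Fin m.1),
        if PatLe p ⟨m.1, z⟩ ∧ PatLe ⟨m.1, z⟩ q then permMu p ⟨m.1, z⟩ else 0
  else 0
termination_by q.1
decreasing_by exact m.isLt

/-! ## The Möbius function of a finite poset -/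

/-- The Möbius function `μ(a,b)` of a finite poset. -/
noncomputable def muPair {X : Type*} [PartialOrder X] [Fintype X] (a b : X) : ℤ :=
  if a = b then 1
  else if a ≤ b then
    - ∑ z ∈ (Finset.univ.filter fun z : X => a ≤ z ∧ z < b).attach, muPair a z.1
  else 0
termination_by Set.ncard {z : X | z < b}
decreasing_by
  rename_i z
  have hz : z.1 < b := ((Finset.mem_filter.mp z.2).2).2
  exact Set.ncard_lt_ncard
    ((Set.ssubset_iff_of_subset (fun w hw => lt_trans hw hz)).mpr ⟨z.1, hz, fun hmem => absurd hmem (by exact lt_irrefl _)⟩)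
    (Set.toFinite _)

instance instFiniteOption' {α : Type*} [Finite α] : Finite (Option α) :=
  Finite.of_equiv (α ⊕ PUnit.{1}) (Equiv.optionEquivSumPUnit.{0} α).symm
instance {α : Type*} [Finite α] : Finite (WithTop α) := inferInstanceAs (Finite (Option α))
instance {α : Type*} [Finite α] : Finite (WithBot α) := inferInstanceAs (Finite (Option α))
instance {α : Type*} [Fintype α] : Fintype (WithTop α) := inferInstanceAs (Fintype (Option α))
instance {α : Type*} [Fintype α] : Fintype (WithBot α) := inferInstanceAs (Fintype (Option α))

/-- For a finite poset `X`, `muHat X` is `μ(0̂,1̂)` computed in the poset obtained from `X`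
by adjoining a new bottom element `0̂` and a new top element `1̂`.  (For infinite `X` the
junk value `0` is returned.) -/
noncomputable def muHat (X : Type*) [PartialOrder X] : ℤ :=
  if h : Finite X then
    letI := h
    letI : Fintype (WithBot (WithTop X)) := Fintype.ofFinite _
    muPair (⊥ : WithBot (WithTop X)) ⊤
  else 0

/-! ## Adjacencies, embeddings, normality -/

/-- The position one step before `j` (or `j` itself when `j = 0`). -/
def prevPos {n : ℕ} (j : Fin n) : Fin n := ⟨j.val - 1, lt_of_le_of_lt (Nat.sub_le _ _) j.isLt⟩

/-- `Linked π j` says position `j` is linked to the preceding position, i.e. the letters in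
positions `j-1, j` have consecutive values.  These are exactly the positions lying in the
tail of some adjacency of `π` (an adjacency is a maximal factor of consecutively valued
increasing or decreasing letters; its tail is all but its first letter). -/
def Linked {n : ℕ} (π : Equiv.Perm (Fin n)) (j : Fin n) : Prop :=
  0 < j.val ∧ ((π j).val + 1 = (π (prevPos j)).val ∨ (π (prevPos j)).val + 1 = (π j).val)

/-- The number of adjacencies (maximal linked runs) of `π`. -/
noncomputable def numBlocks {n : ℕ} (π : Equiv.Perm (Fin n)) : ℕ :=
  (Finset.univ.filter fun j : Fin n => ¬ Linked π j).card

/-- The index (starting from 0) of the adjacency of `π` containing position `j`. -/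
noncomputable def blockIdx {n : ℕ} (π : Equiv.Perm (Fin n)) (j : Fin n) : ℕ :=
  (Finset.univ.filter fun m : Fin n => ¬ Linked π m ∧ m ≤ j).card - 1

/-- The set of positions in the `i`-th adjacency of `π`. -/
noncomputable def blockF {n : ℕ} (π : Equiv.Perm (Fin n)) (i : ℕ) : Finset (Fin n) :=
  Finset.univ.filter fun j => blockIdx π j = i

/-- The standardization of an injective tuple `v` of values in `Fin n`: the permutation of
`Fin m` whose letters are in the same relative order as `v`. -/
noncomputable def stdize {m n : ℕ} (v : Fin m → Fin n) (hv : Function.Injective v) :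
    Equiv.Perm (Fin m) :=
  (Equiv.ofInjective v hv).trans
    (monoEquivOfFin (Set.range v)
      (by rw [Set.card_range_of_injective hv, Fintype.card_fin])).symm.toEquiv

/-- The pattern (as an abstract permutation) formed by the letters of `π` in the set `E`
of positions. -/
noncomputable def patternOf {n : ℕ} (π : Equiv.Perm (Fin n)) (E : Finset (Fin n)) : PermPat :=
  ⟨E.card, stdize (fun i => π ((E.orderIsoOfFin rfl) i))
    (by
      intro i j hij
      exact (E.orderIsoOfFin rfl).injective (Subtype.coe_injective (π.injective hij)))⟩

/-- `E` is (the set of positions of the nonzero entries of) an embedding of `p` in `π`: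
the letters of `π` in positions `E` form an occurrence of `p`. -/
def IsEmb (p : PermPat) {n : ℕ} (π : Equiv.Perm (Fin n)) (E : Finset (Fin n)) : Prop :=
  patternOf π E = p

/-- An embedding (given by its set `E` of nonzero positions) is normal if every position in
the tail of an adjacency of `π` is nonzero. -/
def IsNormal {n : ℕ} (π : Equiv.Perm (Fin n)) (E : Finset (Fin n)) : Prop :=
  ∀ j, Linked π j → j ∈ E

/-- `NE p π`: the number of normal embeddings of `p` in `π`. -/
noncomputable def NE (p : PermPat) {n : ℕ} (π : Equiv.Perm (Fin n)) : ℕ :=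
  Set.ncard {E : Finset (Fin n) | IsEmb p π E ∧ IsNormal π E}

/-- An embedding is rightmost if, within each adjacency of `π`, all of its zero entries
precede all of its nonzero entries. -/
def IsRightmost {n : ℕ} (π : Equiv.Perm (Fin n)) (E : Finset (Fin n)) : Prop :=
  ∀ i j : Fin n, blockIdx π i = blockIdx π j → i ≤ j → i ∈ E → j ∈ E

/-- Membership in `Ê^{p,π}`, the set of rightmost embeddings of `p` in `π`. -/
def EhatMem (p : PermPat) {n : ℕ} (π : Equiv.Perm (Fin n)) (E : Finset (Fin n)) : Prop :=
  IsEmb p π E ∧ IsRightmost π E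

/-- Membership in `EZ^{p,π}`: `S` is a nonempty set of rightmost embeddings of `p` in `π`
whose zero sets have empty intersection (every position is nonzero in some member). -/
def EZmem (p : PermPat) {n : ℕ} (π : Equiv.Perm (Fin n)) (S : Finset (Finset (Fin n))) : Prop :=
  S.Nonempty ∧ (∀ E ∈ S, EhatMem p π E) ∧ ∀ j : Fin n, ∃ E ∈ S, j ∈ E

/-- The sum `∑_{S ∈ EZ^{p,π}} (-1)^{|S|}`. -/
noncomputable def EZsum (p : PermPat) {n : ℕ} (π : Equiv.Perm (Fin n)) : ℤ :=
  ∑ S ∈ Finset.univ.filter (fun S : Finset (Finset (Fin n)) => EZmem p π S), (-1 : ℤ) ^ S.card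

/-! ## The adjacency decomposition and the posets `P(η)`, `A^{σ,π}` -/

/-- `π̂`, the adjacency decomposition of `π`, as a tuple of permutations. -/
noncomputable def Phat {n : ℕ} (π : Equiv.Perm (Fin n)) : Fin (numBlocks π) → PermPat :=
  fun i => patternOf π (blockF π i.val)

/-- `η̂`, the decomposition of an embedding (with nonzero positions `E`) along the
adjacencies of `π`. -/
noncomputable def etaHat {n : ℕ} (π : Equiv.Perm (Fin n)) (E : Finset (Fin n)) :
    Fin (numBlocks π) → PermPat :=
  fun i => patternOf π (E.filter fun j => blockIdx π j = i.val)

/-- The product poset `P(η) = [η̂_1,π̂_1] × ⋯ × [η̂_t,π̂_t]`, as a subset of the product of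
copies of the pattern poset indexed by the adjacencies of `π`. -/
noncomputable def Pemb {n : ℕ} (π : Equiv.Perm (Fin n)) (E : Finset (Fin n)) :
    Set (Fin (numBlocks π) → PermPat) :=
  Set.Icc (etaHat π E) (Phat π)

/-- `P(η)°`: the product poset `P(η)` with its bottom element `η̂` and top element `π̂`
removed. -/
noncomputable def PembO {n : ℕ} (π : Equiv.Perm (Fin n)) (E : Finset (Fin n)) :
    Set (Fin (numBlocks π) → PermPat) :=
  Pemb π E \ {etaHat π E, Phat π}

/-- `A^{p,π} = ⋃_{η ∈ Ê^{p,π}} P(η)°`. -/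
noncomputable def Aspace (p : PermPat) {n : ℕ} (π : Equiv.Perm (Fin n)) :
    Set (Fin (numBlocks π) → PermPat) :=
  ⋃ E ∈ {E : Finset (Fin n) | EhatMem p π E}, PembO π E

/-! ## Sundry notions -/

/-- The number of descents of a permutation. -/
noncomputable def desNum {n : ℕ} (π : Equiv.Perm (Fin n)) : ℕ :=
  (Finset.univ.filter fun j : Fin n => ∃ h : j.val + 1 < n, π ⟨j.val + 1, h⟩ < π j).card

/-- The direct sum of two permutations. -/
def dsum {a b : ℕ} (σ : Equiv.Perm (Fin a)) (τ : Equiv.Perm (Fin b)) :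
    Equiv.Perm (Fin (a + b)) :=
  finSumFinEquiv.symm.trans ((Equiv.sumCongr σ τ).trans finSumFinEquiv)

/-- A permutation is indecomposable if it is nonempty and not the direct sum of two
nonempty permutations. -/
def Indecomp (p : PermPat) : Prop :=
  0 < p.1 ∧ ¬ ∃ (a b : ℕ) (σ : Equiv.Perm (Fin a)) (τ : Equiv.Perm (Fin b)),
    0 < a ∧ 0 < b ∧ p = ⟨a + b, dsum σ τ⟩

/-- `dpow lam m = lam ⊕ ⋯ ⊕ lam` (`m` summands). -/
def dpow {l : ℕ} (lam : Equiv.Perm (Fin l)) : (m : ℕ) → Equiv.Perm (Fin (m * l))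
  | 0 => (finCongr (Nat.zero_mul l).symm).permCongr 1
  | m + 1 => (finCongr (by ring : m * l + l = (m + 1) * l)).permCongr (dsum (dpow lam m) lam)

/-- Direct sum of permutations, on `PermPat`. -/
def dsumP (p q : PermPat) : PermPat := ⟨p.1 + q.1, dsum p.2 q.2⟩

/-- The direct sum of a list of permutations. -/
def dsumList : List PermPat → PermPat
  | [] => ⟨0, 1⟩
  | p :: L => dsumP p (dsumList L)

/-- The increasing permutation `ι_n = 12⋯n`. -/
def iota (n : ℕ) : PermPat := ⟨n, 1⟩


/-! ### Basic pattern lemmas -/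

lemma perm_uniq {m : ℕ} (q w : Equiv.Perm (Fin m))
    (h : ∀ i j, q i < q j ↔ w i < w j) : q = w := by
  have hmono : StrictMono (fun a => w (q.symm a)) := by
    intro a b hab
    have : q (q.symm a) < q (q.symm b) := by simpa using hab
    exact (h _ _).mp this
  have hid : ∀ a, w (q.symm a) = a := fun a => hmono.fin_apply_eq a
  apply Equiv.ext
  intro x
  have := hid (q x)
  simpa using this.symm

lemma patLe_eq_of_len {p q : PermPat} (h : PatLe p q) (hl : p.1 = q.1) : p = q := by
  obtain ⟨k, σ⟩ := p
  obtain ⟨n, π⟩ := q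
  simp only at hl
  subst hl
  obtain ⟨f, hf⟩ := h
  have hfid : ∀ i, f i = i := fun i => f.strictMono.fin_apply_eq i
  have key : ∀ i j : Fin k, σ i < σ j ↔ π i < π j := by
    intro i j; simpa [hfid] using hf i j
  rw [perm_uniq σ π key]

lemma patLe_len_lt {p q : PermPat} (h : PatLe p q) (hne : p ≠ q) : p.1 < q.1 :=
  lt_of_le_of_ne h.len_le fun hl => hne (patLe_eq_of_len h hl)

section Pattern
variable {n : ℕ} (π : Equiv.Perm (Fin n))

lemma patternOf_snd_lt_iff (E : Finset (Fin n)) (i j : Fin E.card) :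
    (patternOf π E).2 i < (patternOf π E).2 j ↔
      π (E.orderEmbOfFin rfl i) < π (E.orderEmbOfFin rfl j) := by
  show stdize _ _ i < stdize _ _ j ↔ _
  unfold stdize
  simp only [Equiv.trans_apply, RelIso.coe_fn_toEquiv]
  rw [OrderIso.lt_iff_lt]
  simp only [Equiv.ofInjective_apply, Subtype.mk_lt_mk, Finset.coe_orderIsoOfFin_apply]
  exact Iff.rfl

lemma patternOf_eq_of_enum {m : ℕ} (q : Equiv.Perm (Fin m)) (E : Finset (Fin n))
    (g : Fin m → Fin n) (hg : StrictMono g) (hE : Finset.image g Finset.univ = E)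
    (hrel : ∀ i j, q i < q j ↔ π (g i) < π (g j)) : patternOf π E = ⟨m, q⟩ := by
  have hcard : E.card = m := by
    rw [← hE, Finset.card_image_of_injective _ hg.injective, Finset.card_univ,
      Fintype.card_fin]
  subst hcard
  have hgE : ∀ x, g x ∈ E := fun x => hE ▸ Finset.mem_image_of_mem g (Finset.mem_univ x)
  have hge : g = ⇑(E.orderEmbOfFin rfl) := Finset.orderEmbOfFin_unique rfl hgE hg
  have key : ∀ i j, (patternOf π E).2 i < (patternOf π E).2 j ↔ q i < q j := by
    intro i j
    refine (patternOf_snd_lt_iff π E i j).trans ?_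
    rw [hge] at hrel
    exact (hrel i j).symm
  have h2 : (patternOf π E).2 = q := perm_uniq _ _ key
  exact Sigma.ext rfl (heq_of_eq h2)

lemma patternOf_univ : patternOf π Finset.univ = ⟨n, π⟩ := by
  refine patternOf_eq_of_enum π π Finset.univ id strictMono_id (by simp) (by simp)

lemma patternOf_mono {E1 E2 : Finset (Fin n)} (h : E1 ⊆ E2) :
    PatLe (patternOf π E1) (patternOf π E2) := by
  have hmem : ∀ i : Fin E1.card, E1.orderEmbOfFin rfl i ∈ E2 :=
    fun i => h (Finset.orderEmbOfFin_mem E1 rfl i)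
  set f0 : Fin E1.card → Fin E2.card :=
    fun i => (E2.orderIsoOfFin rfl).symm ⟨E1.orderEmbOfFin rfl i, hmem i⟩ with hf0
  have hsm : StrictMono f0 := by
    intro i j hij
    rw [hf0]
    apply (E2.orderIsoOfFin rfl).symm.lt_iff_lt.mpr
    exact Subtype.mk_lt_mk.mpr ((E1.orderEmbOfFin rfl).strictMono hij)
  have key : ∀ i, E2.orderEmbOfFin rfl (f0 i) = E1.orderEmbOfFin rfl i := by
    intro i
    rw [hf0, ← Finset.coe_orderIsoOfFin_apply, OrderIso.apply_symm_apply]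
  exact ⟨OrderEmbedding.ofStrictMono f0 hsm, fun (i j : Fin E1.card) => by
    refine (patternOf_snd_lt_iff π E1 i j).trans (Iff.trans ?_ (patternOf_snd_lt_iff π E2 _ _).symm)
    show _ ↔ π (E2.orderEmbOfFin rfl (f0 i)) < π (E2.orderEmbOfFin rfl (f0 j))
    rw [key, key]⟩

lemma patternOf_le_top (E : Finset (Fin n)) : PatLe (patternOf π E) ⟨n, π⟩ := by
  have := patternOf_mono π (Finset.subset_univ E)
  rwa [patternOf_univ] at this

lemma exists_subset_of_patLe {z : PermPat} {E : Finset (Fin n)}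
    (h : PatLe z (patternOf π E)) :
    ∃ E' : Finset (Fin n), E' ⊆ E ∧ patternOf π E' = z := by
  obtain ⟨f, hf⟩ := h
  set g : Fin z.1 → Fin n := fun i => E.orderEmbOfFin rfl (f i) with hgdef
  have hsm : StrictMono g := fun i j hij =>
    (E.orderEmbOfFin rfl).strictMono (f.strictMono hij)
  refine ⟨Finset.image g Finset.univ, ?_, ?_⟩
  · intro x hx
    obtain ⟨i, -, rfl⟩ := Finset.mem_image.mp hx
    exact Finset.orderEmbOfFin_mem E rfl (f i)
  · have := patternOf_eq_of_enum π z.2 (Finset.image g Finset.univ) g hsm rfl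
      (fun i j => by rw [hf]; exact patternOf_snd_lt_iff π E (f i) (f j))
    rwa [Sigma.eta] at this

end Pattern

/-! ### Block (adjacency) machinery -/

section Blocks
variable {n : ℕ} (π : Equiv.Perm (Fin n))

/-- The set of unlinked positions `≤ j`. -/
noncomputable def bset (j : Fin n) : Finset (Fin n) :=
  Finset.univ.filter (fun m => ¬ Linked π m ∧ m ≤ j)

noncomputable def bc (j : Fin n) : ℕ := (bset π j).card

lemma blockIdx_eq_bc (j : Fin n) : blockIdx π j = bc π j - 1 := rfl

lemma not_linked_of_val_zero {j : Fin n} (hj : j.val = 0) : ¬ Linked π j := by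
  intro h
  exact absurd h.1 (by omega)

lemma zero_mem_bset (j : Fin n) : (⟨0, j.pos⟩ : Fin n) ∈ bset π j := by
  refine Finset.mem_filter.mpr ⟨Finset.mem_univ _, not_linked_of_val_zero π rfl, ?_⟩
  exact Fin.mk_le_of_le_val (Nat.zero_le _)

lemma bc_pos (j : Fin n) : 1 ≤ bc π j :=
  Finset.card_pos.mpr ⟨_, zero_mem_bset π j⟩

lemma bset_mono {i j : Fin n} (h : i ≤ j) : bset π i ⊆ bset π j := by
  intro m hm
  obtain ⟨-, h1, h2⟩ := Finset.mem_filter.mp hm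
  exact Finset.mem_filter.mpr ⟨Finset.mem_univ _, h1, le_trans h2 h⟩

lemma bc_mono {i j : Fin n} (h : i ≤ j) : bc π i ≤ bc π j :=
  Finset.card_le_card (bset_mono π h)

lemma sameblock_iff {i j : Fin n} : blockIdx π i = blockIdx π j ↔ bc π i = bc π j := by
  rw [blockIdx_eq_bc, blockIdx_eq_bc]
  have := bc_pos π i
  have := bc_pos π j
  omega

lemma bk_linked {i j : Fin n} (hij : i ≤ j) (h : bc π i = bc π j) :
    ∀ m : Fin n, i < m → m ≤ j → Linked π m := by
  intro m h1 h2
  by_contra hm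
  have hmem : m ∈ bset π j := Finset.mem_filter.mpr ⟨Finset.mem_univ _, hm, h2⟩
  have hnot : m ∉ bset π i := by
    intro hc
    exact absurd ((Finset.mem_filter.mp hc).2.2) (not_le_of_gt h1)
  have : bc π i < bc π j :=
    Finset.card_lt_card ⟨bset_mono π hij, fun hsub => hnot (hsub hmem)⟩
  omega

lemma bk_of_linked {i j : Fin n} (hij : i ≤ j)
    (h : ∀ m : Fin n, i < m → m ≤ j → Linked π m) : bc π i = bc π j := by
  refine le_antisymm (bc_mono π hij) (Finset.card_le_card ?_)
  intro m hm
  obtain ⟨-, h1, h2⟩ := Finset.mem_filter.mp hm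
  refine Finset.mem_filter.mpr ⟨Finset.mem_univ _, h1, ?_⟩
  by_contra hc
  exact h1 (h m (lt_of_not_ge hc) h2)

lemma bc_squeeze {i m j : Fin n} (h1 : i ≤ m) (h2 : m ≤ j) (h : bc π i = bc π j) :
    bc π i = bc π m :=
  le_antisymm (bc_mono π h1) (h ▸ bc_mono π h2)

/-- Head of the block of `j`: the largest unlinked position `≤ j`. -/
noncomputable def headOf (j : Fin n) : Fin n :=
  (bset π j).max' ⟨_, zero_mem_bset π j⟩

lemma headOf_mem (j : Fin n) : headOf π j ∈ bset π j := Finset.max'_mem _ _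

lemma headOf_not_linked (j : Fin n) : ¬ Linked π (headOf π j) :=
  (Finset.mem_filter.mp (headOf_mem π j)).2.1

lemma headOf_le (j : Fin n) : headOf π j ≤ j :=
  (Finset.mem_filter.mp (headOf_mem π j)).2.2

lemma headOf_sameblock (j : Fin n) : bc π (headOf π j) = bc π j := by
  refine bk_of_linked π (headOf_le π j) ?_
  intro m h1 h2
  by_contra hm
  have hmem : m ∈ bset π j := Finset.mem_filter.mpr ⟨Finset.mem_univ _, hm, h2⟩
  exact absurd (Finset.le_max' _ _ hmem) (not_le_of_gt h1)

lemma le_of_sameblock_not_linked {i j : Fin n} (hl : ¬ Linked π i)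
    (h : bc π i = bc π j) : i ≤ j := by
  by_contra hc
  push_neg at hc
  exact hl (bk_linked π (le_of_lt hc) h.symm i hc (le_refl i))

/-! ### Direction within a block -/

/-- The value increases at position `j` relative to the previous position. -/
def Up (j : Fin n) : Prop := (π (prevPos j)).val + 1 = (π j).val

lemma linked_cases {j : Fin n} (h : Linked π j) :
    (π j).val + 1 = (π (prevPos j)).val ∨ Up π j := h.2

lemma prevPos_val {j : Fin n} : (prevPos j).val = j.val - 1 := rfl

lemma dir_step {j j' : Fin n} (hv : j'.val = j.val + 1) (hj : Linked π j)
    (hj' : Linked π j') : Up π j ↔ Up π j' := by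
  have hprev : prevPos j' = j := by
    apply Fin.ext; rw [prevPos_val]; omega
  have hac : π (prevPos j) ≠ π j' := by
    intro h
    have := π.injective h
    have h1 : (prevPos j).val = j'.val := congrArg Fin.val this
    rw [prevPos_val] at h1
    have := hj.1
    omega
  have h1 := hj.2
  have h2 := hj'.2
  rw [hprev] at h2
  have hac' : (π (prevPos j)).val ≠ (π j').val :=
    fun h => hac (Fin.ext h)
  unfold Up
  rw [hprev]
  omega

lemma up_chain : ∀ (d : ℕ) (x : Fin n) (h : x.val + d < n),
    (∀ m : Fin n, x.val < m.val → m.val ≤ x.val + d → Linked π m ∧ Up π m) →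
    (π ⟨x.val + d, h⟩).val = (π x).val + d := by
  intro d
  induction d with
  | zero => intro x h _; congr 1
  | succ d ih =>
    intro x h hall
    have hd : x.val + d < n := by omega
    have hd1 : x.val + d + 1 < n := by omega
    set y : Fin n := ⟨x.val + d, hd⟩ with hy
    set y' : Fin n := ⟨x.val + d + 1, hd1⟩ with hy'
    have hcast : (⟨x.val + (d+1), h⟩ : Fin n) = y' := Fin.ext rfl
    rw [hcast]
    have hup : Up π y' := (hall y' (by simp [hy']) (by simp [hy'])).2
    unfold Up at hup
    have hprev : prevPos y' = y := Fin.ext (by simp [prevPos_val, hy, hy'])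
    rw [hprev] at hup
    have hih := ih x hd (fun m h1 h2 => hall m h1 (by omega))
    rw [← hy] at hih
    omega

lemma down_chain : ∀ (d : ℕ) (x : Fin n) (h : x.val + d < n),
    (∀ m : Fin n, x.val < m.val → m.val ≤ x.val + d → Linked π m ∧ ¬ Up π m) →
    (π ⟨x.val + d, h⟩).val + d = (π x).val := by
  intro d
  induction d with
  | zero => intro x h _; congr 2
  | succ d ih =>
    intro x h hall
    have hd : x.val + d < n := by omega
    have hd1 : x.val + d + 1 < n := by omega
    set y : Fin n := ⟨x.val + d, hd⟩ with hy
    set y' : Fin n := ⟨x.val + d + 1, hd1⟩ with hy'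
    have hcast : (⟨x.val + (d+1), h⟩ : Fin n) = y' := Fin.ext rfl
    rw [hcast]
    have hm := hall y' (by simp [hy']) (by simp [hy'])
    have hdn : (π y').val + 1 = (π (prevPos y')).val := by
      rcases hm.1.2 with h' | h'
      · exact h'
      · exact absurd h' hm.2
    have hprev : prevPos y' = y := Fin.ext (by simp [prevPos_val, hy, hy'])
    rw [hprev] at hdn
    have hih := ih x hd (fun m h1 h2 => hall m h1 (by omega))
    rw [← hy] at hih
    omega

lemma chain_up_iff (x : Fin n) (d : ℕ)
    (hall : ∀ m : Fin n, x.val < m.val → m.val ≤ x.val + d → Linked π m) :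
    ∀ (e : ℕ) (m m' : Fin n), x.val < m.val → m'.val = m.val + e →
      m'.val ≤ x.val + d → (Up π m ↔ Up π m') := by
  intro e
  induction e with
  | zero =>
    intro m m' h1 h2 h3
    have : m = m' := Fin.ext (by omega)
    rw [this]
  | succ e ih =>
    intro m m' h1 h2 h3
    have hm'' : m.val + e < n := by have := m'.isLt; omega
    have := ih m ⟨m.val + e, hm''⟩ h1 rfl (by simp; omega)
    rw [this]
    exact dir_step π (by simp; omega)
      (hall ⟨m.val + e, hm''⟩ (by simp; omega) (by simp; omega))
      (hall m' (by omega) h3)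

lemma chain_up_iff' (x : Fin n) (d : ℕ)
    (hall : ∀ m : Fin n, x.val < m.val → m.val ≤ x.val + d → Linked π m)
    (m m' : Fin n) (h1 : x.val < m.val) (h1' : x.val < m'.val)
    (h3 : m.val ≤ x.val + d) (h3' : m'.val ≤ x.val + d) : Up π m ↔ Up π m' := by
  rcases le_total m.val m'.val with h | h
  · exact chain_up_iff π x d hall (m'.val - m.val) m m' h1 (by omega) h3'
  · exact (chain_up_iff π x d hall (m.val - m'.val) m' m h1' (by omega) h3).symm

end Blocks

/-! ### Comparison lemmas within and across blocks -/

section Cmp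
variable {n : ℕ} (π : Equiv.Perm (Fin n))

lemma sameblock_lt_iff {x y x' y' : Fin n} (hxy : x < y) (hxy' : x' < y')
    (h1 : bc π x = bc π y) (h2 : bc π x = bc π x') (h3 : bc π x = bc π y') :
    (π x < π y ↔ π x' < π y') := by
  set w : Fin n := min x x' with hw
  set w' : Fin n := max y y' with hw'
  have h1' : bc π x' = bc π y' := by omega
  have hbw : bc π w = bc π x := by
    rcases min_cases x x' with ⟨hc, -⟩ | ⟨hc, -⟩ <;> rw [hw, hc] <;> omega
  have hbw' : bc π x = bc π w' := by
    rcases max_cases y y' with ⟨hc, -⟩ | ⟨hc, -⟩ <;> rw [hw', hc] <;> omega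
  have hww' : w ≤ w' := le_trans (le_trans (min_le_left x x') (le_of_lt hxy))
    (le_max_left y y')
  have hbcw : bc π w = bc π w' := by omega
  set d : ℕ := w'.val - w.val with hd
  have hall : ∀ m : Fin n, w.val < m.val → m.val ≤ w.val + d → Linked π m := by
    intro m hm1 hm2
    refine bk_linked π hww' hbcw m ?_ ?_
    · exact Fin.lt_def.mpr hm1
    · apply Fin.le_def.mpr; omega
  -- helper: for a pair a < b inside the chain, π a < π b ↔ Up π b
  have key : ∀ a b : Fin n, a < b → w ≤ a → b ≤ w' → (π a < π b ↔ Up π b) := by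
    intro a b hab hwa hbw'
    have hup_or : Up π b ∨ ¬ Up π b := em _
    have hba : b.val = a.val + (b.val - a.val) := by
      have := Fin.lt_def.mp hab; omega
    have hbfin : a.val + (b.val - a.val) < n := by rw [← hba]; exact b.isLt
    have hcast : b = ⟨a.val + (b.val - a.val), hbfin⟩ := Fin.ext hba
    have hchain : ∀ m : Fin n, a.val < m.val → m.val ≤ b.val → Linked π m := by
      intro m hm1 hm2
      refine hall m ?_ ?_
      · have := Fin.le_def.mp hwa; omega
      · have := Fin.le_def.mp hbw'; have := Fin.lt_def.mp hab; omega
    rcases hup_or with hup | hdn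
    · have hallup : ∀ m : Fin n, a.val < m.val → m.val ≤ a.val + (b.val - a.val) →
          Linked π m ∧ Up π m := by
        intro m hm1 hm2
        refine ⟨hchain m hm1 (by omega), ?_⟩
        rw [chain_up_iff' π a (b.val - a.val) (fun m hh1 hh2 => hchain m hh1 (by omega))
          m b hm1 (Fin.lt_def.mp hab) hm2 (by omega)]
        exact hup
      have := up_chain π (b.val - a.val) a hbfin hallup
      rw [← hcast] at this
      have hd0 : 0 < b.val - a.val := by have := Fin.lt_def.mp hab; omega
      simp only [hup, iff_true]
      exact Fin.lt_def.mpr (by omega)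
    · have halldn : ∀ m : Fin n, a.val < m.val → m.val ≤ a.val + (b.val - a.val) →
          Linked π m ∧ ¬ Up π m := by
        intro m hm1 hm2
        refine ⟨hchain m hm1 (by omega), ?_⟩
        rw [chain_up_iff' π a (b.val - a.val) (fun m hh1 hh2 => hchain m hh1 (by omega))
          m b hm1 (Fin.lt_def.mp hab) hm2 (by omega)]
        exact hdn
      have := down_chain π (b.val - a.val) a hbfin halldn
      rw [← hcast] at this
      have hd0 : 0 < b.val - a.val := by have := Fin.lt_def.mp hab; omega
      simp only [hdn, iff_false, not_lt]
      apply le_of_lt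
      exact Fin.lt_def.mpr (by omega)
  have hk1 := key x y hxy (min_le_left x x') (le_max_left y y')
  have hk2 := key x' y' hxy' (min_le_right x x') (le_max_right y y')
  rw [hk1, hk2]
  exact chain_up_iff' π w d hall y y'
    (by have := Fin.le_def.mp (min_le_left x x'); have := Fin.lt_def.mp hxy; omega)
    (by have := Fin.le_def.mp (min_le_right x x'); have := Fin.lt_def.mp hxy'; omega)
    (by have := Fin.le_def.mp (le_max_left y y'); omega)
    (by have := Fin.le_def.mp (le_max_right y y'); omega)

lemma cross_aux : ∀ (d : ℕ) (x x' y : Fin n), x.val + d = x'.val →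
    bc π x = bc π x' → bc π x ≠ bc π y →
    ((π x < π y ↔ π x' < π y) ∧ (π y < π x ↔ π y < π x')) := by
  intro d
  induction d with
  | zero =>
    intro x x' y hv _ _
    have : x = x' := Fin.ext hv
    rw [this]
    exact ⟨Iff.rfl, Iff.rfl⟩
  | succ d ih =>
    intro x x' y hv hb hby
    have hd1 : x.val + d < n := by have := x'.isLt; omega
    set x'' : Fin n := ⟨x.val + d, hd1⟩ with hx''
    have hb'' : bc π x = bc π x'' :=
      bc_squeeze π (Fin.le_def.mpr (by simp [hx''])) (Fin.le_def.mpr (by simp [hx'']; omega)) hb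
    have hih := ih x x'' y rfl hb'' hby
    have hlink : Linked π x' :=
      bk_linked π (Fin.le_def.mpr (by omega)) hb x' (Fin.lt_def.mpr (by omega)) (le_refl _)
    have hprev : prevPos x' = x'' := Fin.ext (by simp [prevPos_val, hx'']; omega)
    have hstep := hlink.2
    rw [hprev] at hstep
    have hyx'' : y ≠ x'' := by
      intro hc; rw [hc] at hby; exact hby hb''
    have hyx' : y ≠ x' := by
      intro hc; rw [hc] at hby; exact hby hb
    have hv1 : (π y).val ≠ (π x'').val := fun hc => hyx'' (π.injective (Fin.ext hc))
    have hv2 : (π y).val ≠ (π x').val := fun hc => hyx' (π.injective (Fin.ext hc))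
    obtain ⟨hA, hB⟩ := hih
    constructor
    · rw [hA]
      rw [Fin.lt_def, Fin.lt_def]
      omega
    · rw [hB]
      rw [Fin.lt_def, Fin.lt_def]
      omega

lemma cross_pair {x x' y : Fin n} (hb : bc π x = bc π x') (hby : bc π x ≠ bc π y) :
    ((π x < π y ↔ π x' < π y) ∧ (π y < π x ↔ π y < π x')) := by
  rcases le_total x.val x'.val with h | h
  · exact cross_aux π (x'.val - x.val) x x' y (by omega) hb hby
  · have := cross_aux π (x.val - x'.val) x' x y (by omega) hb.symm
      (by rw [← hb]; exact hby)
    exact ⟨(this.1).symm, (this.2).symm⟩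

lemma crossblock_lt_iff {x y x' y' : Fin n} (hx : bc π x = bc π x')
    (hy : bc π y = bc π y') (hxy : bc π x ≠ bc π y) :
    (π x < π y ↔ π x' < π y') := by
  have h1 := (cross_pair π hx hxy).1
  have h2 := (cross_pair π hy (x := y) (x' := y') (y := x')
    (by rw [← hx]; intro hc; exact hxy hc.symm)).2
  rw [h1, h2]

end Cmp

/-! ### Monotone sequences with equal counts are equal -/

section MonoCount
variable {m : ℕ}

lemma mono_le_iff_card {f : Fin m → ℕ} (hf : Monotone f) (i : Fin m) (t : ℕ) :
    f i ≤ t ↔ i.val + 1 ≤ (Finset.univ.filter (fun j => f j ≤ t)).card := by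
  constructor
  · intro h
    have hsub : Finset.univ.filter (fun j : Fin m => j ≤ i) ⊆
        Finset.univ.filter (fun j => f j ≤ t) := by
      intro j hj
      have hji : j ≤ i := (Finset.mem_filter.mp hj).2
      exact Finset.mem_filter.mpr ⟨Finset.mem_univ _, le_trans (hf hji) h⟩
    have hcard : (Finset.univ.filter (fun j : Fin m => j ≤ i)).card = i.val + 1 := by
      rw [show Finset.univ.filter (fun j : Fin m => j ≤ i) = Finset.Iic i by ext j; simp]
      exact Fin.card_Iic i
    calc i.val + 1 = _ := hcard.symm
      _ ≤ _ := Finset.card_le_card hsub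
  · intro h
    by_contra hc
    push_neg at hc
    have hsub : Finset.univ.filter (fun j => f j ≤ t) ⊆
        Finset.univ.filter (fun j : Fin m => j < i) := by
      intro j hj
      have hjt : f j ≤ t := (Finset.mem_filter.mp hj).2
      refine Finset.mem_filter.mpr ⟨Finset.mem_univ _, ?_⟩
      by_contra hij
      push_neg at hij
      exact absurd (le_trans (hf hij) hjt) (not_le_of_gt hc)
    have hcard : (Finset.univ.filter (fun j : Fin m => j < i)).card = i.val := by
      rw [show Finset.univ.filter (fun j : Fin m => j < i) = Finset.Iio i by ext j; simp]
      exact Fin.card_Iio i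
    have := Finset.card_le_card hsub
    omega

lemma mono_eq_of_counts {f g : Fin m → ℕ} (hf : Monotone f) (hg : Monotone g)
    (h : ∀ t, (Finset.univ.filter (fun j => f j ≤ t)).card
      = (Finset.univ.filter (fun j => g j ≤ t)).card) : f = g := by
  funext i
  have key : ∀ t, f i ≤ t ↔ g i ≤ t := by
    intro t
    rw [mono_le_iff_card hf, mono_le_iff_card hg, h]
  exact le_antisymm ((key (g i)).mpr (le_refl _)) ((key (f i)).mp (le_refl _))

end MonoCount

/-! ### Rightmostification -/

section Rmfy
variable {n : ℕ} (π : Equiv.Perm (Fin n))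

/-- Number of positions in the block of `j` that are `≥ j`. -/
noncomputable def rk (j : Fin n) : ℕ :=
  (Finset.univ.filter (fun m => bc π m = bc π j ∧ j ≤ m)).card

/-- The rightmostification of `E'`. -/
noncomputable def rmfy (E' : Finset (Fin n)) : Finset (Fin n) :=
  Finset.univ.filter (fun j => rk π j ≤ (E'.filter (fun m => bc π m = bc π j)).card)

lemma rk_pos (j : Fin n) : 1 ≤ rk π j :=
  Finset.card_pos.mpr ⟨j, Finset.mem_filter.mpr ⟨Finset.mem_univ _, rfl, le_refl _⟩⟩

lemma rk_le_block (j : Fin n) :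
    rk π j ≤ (Finset.univ.filter (fun m => bc π m = bc π j)).card := by
  apply Finset.card_le_card
  intro m hm
  obtain ⟨-, h1, -⟩ := Finset.mem_filter.mp hm
  exact Finset.mem_filter.mpr ⟨Finset.mem_univ _, h1⟩

lemma rk_anti {i j : Fin n} (hb : bc π i = bc π j) (hij : i ≤ j) : rk π j ≤ rk π i := by
  apply Finset.card_le_card
  intro m hm
  obtain ⟨-, h1, h2⟩ := Finset.mem_filter.mp hm
  exact Finset.mem_filter.mpr ⟨Finset.mem_univ _, by rw [h1, ← hb], le_trans hij h2⟩

lemma rk_strict_anti {i j : Fin n} (hb : bc π i = bc π j) (hij : i < j) :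
    rk π j < rk π i := by
  apply Finset.card_lt_card
  constructor
  · intro m hm
    obtain ⟨-, h1, h2⟩ := Finset.mem_filter.mp hm
    exact Finset.mem_filter.mpr ⟨Finset.mem_univ _, by rw [h1, ← hb], le_trans (le_of_lt hij) h2⟩
  · intro hsub
    have : i ∈ Finset.univ.filter (fun m => bc π m = bc π j ∧ j ≤ m) :=
      hsub (Finset.mem_filter.mpr ⟨Finset.mem_univ _, hb.symm ▸ rfl, le_refl _⟩)
    obtain ⟨-, -, h2⟩ := Finset.mem_filter.mp this
    exact absurd (lt_of_lt_of_le hij h2) (lt_irrefl i)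

lemma mem_rmfy_iff {E' : Finset (Fin n)} {j : Fin n} :
    j ∈ rmfy π E' ↔ rk π j ≤ (E'.filter (fun m => bc π m = bc π j)).card := by
  unfold rmfy
  simp

lemma rmfy_rightmost {E' : Finset (Fin n)} {i j : Fin n} (hb : bc π i = bc π j)
    (hij : i ≤ j) (hi : i ∈ rmfy π E') : j ∈ rmfy π E' := by
  rw [mem_rmfy_iff] at hi ⊢
  calc rk π j ≤ rk π i := rk_anti π hb hij
    _ ≤ _ := by
        refine le_trans hi (le_of_eq ?_)
        congr 1
        apply Finset.filter_congr
        intro m _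
        rw [hb]

/-- Per-block cardinality of the rightmostification. -/
lemma rmfy_block_card (E' : Finset (Fin n)) (b : ℕ) :
    ((rmfy π E').filter (fun m => bc π m = b)).card
      = (E'.filter (fun m => bc π m = b)).card := by
  classical
  set B : Finset (Fin n) := Finset.univ.filter (fun m => bc π m = b) with hB
  set s : ℕ := (E'.filter (fun m => bc π m = b)).card with hs
  have hsB : s ≤ B.card := by
    rw [hs, hB]
    apply Finset.card_le_card
    intro m hm
    exact Finset.mem_filter.mpr ⟨Finset.mem_univ _, (Finset.mem_filter.mp hm).2⟩
  have hset : (rmfy π E').filter (fun m => bc π m = b) = B.filter (fun j => rk π j ≤ s) := by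
    ext j
    simp only [Finset.mem_filter, mem_rmfy_iff, hB, Finset.mem_univ, true_and]
    constructor
    · rintro ⟨h1, h2⟩
      refine ⟨h2, ?_⟩
      rw [hs]
      convert h1 using 2
      apply Finset.filter_congr
      intro m _
      rw [h2]
    · rintro ⟨h2, h1⟩
      refine ⟨?_, h2⟩
      rw [hs] at h1
      convert h1 using 2
      apply Finset.filter_congr
      intro m _
      rw [h2]
  rw [hset]
  -- rk is injective on B with image Icc 1 B.card
  have hinj : Set.InjOn (rk π) B := by
    intro i hi j hj hij
    have hbi : bc π i = b := (Finset.mem_filter.mp hi).2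
    have hbj : bc π j = b := (Finset.mem_filter.mp hj).2
    by_contra hne
    rcases lt_trichotomy i j with h | h | h
    · exact absurd hij (ne_of_gt (rk_strict_anti π (hbi.trans hbj.symm) h))
    · exact hne h
    · exact absurd hij (ne_of_lt (rk_strict_anti π (hbj.trans hbi.symm) h))
  have himg : B.image (rk π) = Finset.Icc 1 B.card := by
    apply Finset.eq_of_subset_of_card_le
    · intro a ha
      obtain ⟨j, hj, rfl⟩ := Finset.mem_image.mp ha
      have hbj : bc π j = b := (Finset.mem_filter.mp hj).2
      refine Finset.mem_Icc.mpr ⟨rk_pos π j, ?_⟩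
      calc rk π j ≤ (Finset.univ.filter (fun m => bc π m = bc π j)).card := rk_le_block π j
        _ = B.card := by rw [hB]; congr 1; apply Finset.filter_congr; intro m _; rw [hbj]
    · rw [Finset.card_image_of_injOn hinj, Nat.card_Icc]
      omega
  have himgf : (B.filter (fun j => rk π j ≤ s)).image (rk π)
      = (B.image (rk π)).filter (fun a => a ≤ s) := by
    ext a
    simp only [Finset.mem_image, Finset.mem_filter]
    constructor
    · rintro ⟨j, hj, rfl⟩
      exact ⟨⟨j, hj.1, rfl⟩, hj.2⟩
    · rintro ⟨⟨j, hjB, rfl⟩, hjs⟩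
      exact ⟨j, ⟨hjB, hjs⟩, rfl⟩
  have hcards : (B.filter (fun j => rk π j ≤ s)).card
      = ((B.image (rk π)).filter (fun a => a ≤ s)).card := by
    rw [← himgf]
    exact (Finset.card_image_of_injOn
      (hinj.mono (fun x hx => Finset.mem_coe.mpr (Finset.filter_subset _ _ hx)))).symm
  rw [hcards, himg]
  rw [show (Finset.Icc 1 B.card).filter (fun a => a ≤ s) = Finset.Icc 1 s by
    ext a; simp only [Finset.mem_filter, Finset.mem_Icc]; omega]
  rw [Nat.card_Icc]
  omega

lemma rmfy_subset {E E' : Finset (Fin n)} (hT : ∀ j, Linked π j → j ∈ E)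
    (hE' : E' ⊆ E) : rmfy π E' ⊆ E := by
  intro j hj
  by_cases hL : Linked π j
  · exact hT j hL
  · rw [mem_rmfy_iff] at hj
    have hall : ∀ m ∈ Finset.univ.filter (fun m => bc π m = bc π j), j ≤ m := by
      intro m hm
      exact le_of_sameblock_not_linked π hL ((Finset.mem_filter.mp hm).2).symm
    have hrk : rk π j = (Finset.univ.filter (fun m => bc π m = bc π j)).card := by
      unfold rk
      congr 1
      ext m
      simp only [Finset.mem_filter, Finset.mem_univ, true_and]
      exact ⟨fun h => h.1, fun h => ⟨h, hall m (Finset.mem_filter.mpr ⟨Finset.mem_univ _, h⟩)⟩⟩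
    have hsub : E'.filter (fun m => bc π m = bc π j)
        ⊆ Finset.univ.filter (fun m => bc π m = bc π j) := by
      intro m hm
      exact Finset.mem_filter.mpr ⟨Finset.mem_univ _, (Finset.mem_filter.mp hm).2⟩
    have heq : E'.filter (fun m => bc π m = bc π j)
        = Finset.univ.filter (fun m => bc π m = bc π j) :=
      Finset.eq_of_subset_of_card_le hsub (by omega)
    have : j ∈ E'.filter (fun m => bc π m = bc π j) := by
      rw [heq]
      exact Finset.mem_filter.mpr ⟨Finset.mem_univ _, rfl⟩
    exact hE' (Finset.mem_filter.mp this).1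

/-- filter by `bc ≤ t` decomposes into fibers. -/
lemma card_filter_bc_le (s : Finset (Fin n)) (t : ℕ) :
    (s.filter (fun m => bc π m ≤ t)).card
      = ∑ b ∈ Finset.range (t + 1), (s.filter (fun m => bc π m = b)).card := by
  rw [Finset.card_eq_sum_card_fiberwise (f := bc π) (t := Finset.range (t + 1))
    (fun x hx => Finset.mem_range.mpr (by
      have := (Finset.mem_filter.mp hx).2; omega))]
  apply Finset.sum_congr rfl
  intro b hb
  congr 1
  ext m
  simp only [Finset.mem_filter, Finset.mem_range] at *
  constructor
  · rintro ⟨⟨h1, h2⟩, h3⟩; exact ⟨h1, h3⟩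
  · rintro ⟨h1, h3⟩; exact ⟨⟨h1, by omega⟩, h3⟩

lemma rmfy_card (E' : Finset (Fin n)) : (rmfy π E').card = E'.card := by
  have h1 : ∀ (s : Finset (Fin n)), s.filter (fun m => bc π m ≤ n) = s := by
    intro s
    apply Finset.filter_true_of_mem
    intro m _
    have : bc π m ≤ Finset.univ.card := Finset.card_le_card (Finset.filter_subset _ _)
    simpa using this
  have h2 := card_filter_bc_le π (rmfy π E') n
  have h3 := card_filter_bc_le π E' n
  rw [h1] at h2 h3
  rw [h2, h3]
  exact Finset.sum_congr rfl (fun b _ => rmfy_block_card π E' b)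

end Rmfy

/-! ### Rightmostification preserves the pattern -/

section RmfyPattern
variable {n : ℕ} (π : Equiv.Perm (Fin n))

lemma image_orderEmbOfFin {E : Finset (Fin n)} {m : ℕ} (h : E.card = m) :
    Finset.image (E.orderEmbOfFin h) Finset.univ = E := by
  apply Finset.eq_of_subset_of_card_le
  · intro x hx
    obtain ⟨i, -, rfl⟩ := Finset.mem_image.mp hx
    exact Finset.orderEmbOfFin_mem E h i
  · rw [Finset.card_image_of_injective _ (E.orderEmbOfFin h).injective, Finset.card_univ,
      Fintype.card_fin, h]

lemma enum_counts {m : ℕ} {s : Finset (Fin n)} (h : s.card = m) (t : ℕ) :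
    (Finset.univ.filter (fun i : Fin m => bc π (s.orderEmbOfFin h i) ≤ t)).card
      = (s.filter (fun e => bc π e ≤ t)).card := by
  apply Finset.card_bij (fun i _ => s.orderEmbOfFin h i)
  · intro i hi
    exact Finset.mem_filter.mpr ⟨Finset.orderEmbOfFin_mem s h i,
      (Finset.mem_filter.mp hi).2⟩
  · intro i _ j _ hij
    exact (s.orderEmbOfFin h).injective hij
  · intro e he
    have : e ∈ (s : Set (Fin n)) := Finset.mem_coe.mpr (Finset.mem_filter.mp he).1
    rw [← Finset.range_orderEmbOfFin s h] at this
    obtain ⟨i, rfl⟩ := this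
    refine ⟨i, Finset.mem_filter.mpr ⟨Finset.mem_univ _, ?_⟩, rfl⟩
    exact (Finset.mem_filter.mp he).2

lemma bc_enum_match {E' R : Finset (Fin n)} (hcard : R.card = E'.card)
    (hcounts : ∀ b, (R.filter (fun m => bc π m = b)).card
      = (E'.filter (fun m => bc π m = b)).card) (i : Fin E'.card) :
    bc π (R.orderEmbOfFin hcard i) = bc π (E'.orderEmbOfFin rfl i) := by
  have hf : Monotone fun i : Fin E'.card => bc π (R.orderEmbOfFin hcard i) :=
    fun i j hij => bc_mono π ((R.orderEmbOfFin hcard).monotone hij)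
  have hg : Monotone fun i : Fin E'.card => bc π (E'.orderEmbOfFin rfl i) :=
    fun i j hij => bc_mono π ((E'.orderEmbOfFin rfl).monotone hij)
  have heq := mono_eq_of_counts hf hg (fun t => by
    rw [enum_counts π hcard t, enum_counts π rfl t,
      card_filter_bc_le π R t, card_filter_bc_le π E' t]
    exact Finset.sum_congr rfl (fun b _ => hcounts b))
  exact congrFun heq i

lemma patternOf_rmfy (E' : Finset (Fin n)) :
    patternOf π (rmfy π E') = patternOf π E' := by
  have hcard : (rmfy π E').card = E'.card := rmfy_card π E'
  set u : Fin E'.card → Fin n := ⇑(E'.orderEmbOfFin rfl) with hu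
  set v : Fin E'.card → Fin n := ⇑((rmfy π E').orderEmbOfFin hcard) with hv
  have hbc : ∀ i, bc π (v i) = bc π (u i) :=
    bc_enum_match π hcard (rmfy_block_card π E')
  have husm : StrictMono u := (E'.orderEmbOfFin rfl).strictMono
  have hvsm : StrictMono v := ((rmfy π E').orderEmbOfFin hcard).strictMono
  have hcmp : ∀ i j : Fin E'.card, i < j →
      (π (u i) < π (u j) ↔ π (v i) < π (v j)) := by
    intro i j hij
    by_cases hsb : bc π (u i) = bc π (u j)
    · exact sameblock_lt_iff π (husm hij) (hvsm hij) hsb (hbc i).symm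
        (by rw [hbc j]; exact hsb)
    · exact crossblock_lt_iff π (hbc i).symm (hbc j).symm hsb
  have hall : ∀ i j : Fin E'.card, (π (u i) < π (u j) ↔ π (v i) < π (v j)) := by
    intro i j
    rcases lt_trichotomy i j with h | h | h
    · exact hcmp i j h
    · subst h; simp
    · have h2 := hcmp j i h
      have hne1 : π (u i) ≠ π (u j) :=
        fun hc => (ne_of_gt h) (husm.injective (π.injective hc))
      have hne2 : π (v i) ≠ π (v j) :=
        fun hc => (ne_of_gt h) (hvsm.injective (π.injective hc))
      constructor
      · intro hlt
        rcases lt_trichotomy (π (v i)) (π (v j)) with hh | hh | hh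
        · exact hh
        · exact absurd hh hne2
        · exact absurd (h2.mpr hh) (asymm hlt)
      · intro hlt
        rcases lt_trichotomy (π (u i)) (π (u j)) with hh | hh | hh
        · exact hh
        · exact absurd hh hne1
        · exact absurd (h2.mp hh) (asymm hlt)
  have := patternOf_eq_of_enum π (patternOf π E').2 (rmfy π E') v hvsm
    (image_orderEmbOfFin hcard)
    (fun i j => (patternOf_snd_lt_iff π E' i j).trans (hall i j))
  exact this

lemma rmfy_ehat {z : PermPat} {E0 : Finset (Fin n)} (h : patternOf π E0 = z) :
    EhatMem z π (rmfy π E0) := by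
  constructor
  · show patternOf π (rmfy π E0) = z
    rw [patternOf_rmfy]; exact h
  · intro i j hbij hle hi
    exact rmfy_rightmost π ((sameblock_iff π).mp hbij) hle hi

lemma key_erase {z : PermPat} {E : Finset (Fin n)} {j : Fin n}
    (hT : ∀ m, Linked π m → m ∈ E)
    (hz : PatLe z (patternOf π E))
    (hj : ∀ S, EhatMem z π S → j ∉ S) :
    PatLe z (patternOf π (E.erase (headOf π j))) := by
  obtain ⟨E0, hE0sub, hE0pat⟩ := exists_subset_of_patLe π hz
  have hR := rmfy_ehat π hE0pat
  have hjR : j ∉ rmfy π E0 := hj _ hR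
  have hRsub : rmfy π E0 ⊆ E := rmfy_subset π hT hE0sub
  have hhead : headOf π j ∉ rmfy π E0 := by
    intro hc
    exact hjR (rmfy_rightmost π (headOf_sameblock π j) (headOf_le π j) hc)
  have hsub : rmfy π E0 ⊆ E.erase (headOf π j) := fun x hx =>
    Finset.mem_erase.mpr ⟨fun hc => hhead (hc ▸ hx), hRsub hx⟩
  have hle := patternOf_mono π hsub
  rw [patternOf_rmfy, hE0pat] at hle
  exact hle

end RmfyPattern

/-! ### The sign-reversing involution -/

section Invol
variable {n : ℕ} (π : Equiv.Perm (Fin n))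

lemma card_le_n (E : Finset (Fin n)) : E.card ≤ n := by
  have := Finset.card_le_univ E
  simpa using this

lemma sum_F_zero {z : PermPat} (j : Fin n)
    (hj : ∀ S, EhatMem z π S → j ∉ S) :
    ∑ E ∈ Finset.univ.filter (fun E : Finset (Fin n) =>
      (∀ m, Linked π m → m ∈ E) ∧ PatLe z (patternOf π E)),
      (-1 : ℤ) ^ (n - E.card) = 0 := by
  set j' := headOf π j with hj'
  have hj'nl : ¬ Linked π j' := headOf_not_linked π j
  refine Finset.sum_involution
    (fun E _ => if j' ∈ E then E.erase j' else insert j' E) ?_ ?_ ?_ ?_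
  · intro E _
    by_cases hmem : j' ∈ E
    · simp only [hmem, if_true]
      have h1 : 1 ≤ E.card := Finset.card_pos.mpr ⟨j', hmem⟩
      have h2 : E.card ≤ n := card_le_n E
      rw [Finset.card_erase_of_mem hmem]
      rw [show n - (E.card - 1) = (n - E.card) + 1 by omega]
      ring
    · simp only [hmem, if_false]
      have h2 : (insert j' E).card ≤ n := card_le_n _
      rw [Finset.card_insert_of_notMem hmem] at h2 ⊢
      rw [show n - E.card = (n - (E.card + 1)) + 1 by omega]
      ring
  · intro E _ _
    by_cases hmem : j' ∈ E
    · simp only [hmem, if_true]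
      intro hc
      have := congrArg Finset.card hc
      rw [Finset.card_erase_of_mem hmem] at this
      have h1 : 1 ≤ E.card := Finset.card_pos.mpr ⟨j', hmem⟩
      omega
    · simp only [hmem, if_false]
      intro hc
      have := congrArg Finset.card hc
      rw [Finset.card_insert_of_notMem hmem] at this
      omega
  · intro E hE
    obtain ⟨-, hT, hz⟩ := Finset.mem_filter.mp hE
    by_cases hmem : j' ∈ E
    · simp only [hmem, if_true]
      refine Finset.mem_filter.mpr ⟨Finset.mem_univ _, ?_, ?_⟩
      · intro m hm
        exact Finset.mem_erase.mpr ⟨fun hc => hj'nl (hc ▸ hm), hT m hm⟩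
      · exact key_erase π hT hz hj
    · simp only [hmem, if_false]
      refine Finset.mem_filter.mpr ⟨Finset.mem_univ _, ?_, ?_⟩
      · intro m hm
        exact Finset.mem_insert_of_mem (hT m hm)
      · exact patLe_trans hz (patternOf_mono π (Finset.subset_insert j' E))
  · intro E _
    by_cases hmem : j' ∈ E
    · simp only [hmem, if_true, Finset.notMem_erase, if_false]
      exact Finset.insert_erase hmem
    · simp only [hmem, if_false, Finset.mem_insert_self, if_true]
      exact Finset.erase_insert hmem

end Invol

/-! ### The finite poset of patterns contained in `π` -/

section Below
variable {n : ℕ} (π : Equiv.Perm (Fin n))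

/-- Subtype of patterns contained in `π`. -/
abbrev Below : Type := {z : PermPat // PatLe z ⟨n, π⟩}

instance : Finite (Below π) := by
  have hlt : ∀ z : Below π, z.1.1 < n + 1 := fun z => Nat.lt_succ_of_le z.2.len_le
  apply Finite.of_injective (fun z : Below π =>
    (⟨⟨z.1.1, hlt z⟩, z.1.2⟩ : Σ m : Fin (n + 1), Equiv.Perm (Fin m.1)))
  intro a b h
  have h1 : a.1.1 = b.1.1 := congrArg (fun x => x.1.1) h
  have h3 : HEq a.1.2 b.1.2 := congr_arg_heq (fun s => s.2) h
  exact Subtype.ext (Sigma.ext h1 h3)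

noncomputable instance : Fintype (Below π) := Fintype.ofFinite _

lemma NE_eq_card (p : PermPat) :
    NE p π = (Finset.univ.filter
      (fun E : Finset (Fin n) => IsEmb p π E ∧ IsNormal π E)).card := by
  have hset : {E : Finset (Fin n) | IsEmb p π E ∧ IsNormal π E}
      = ↑(Finset.univ.filter (fun E : Finset (Fin n) => IsEmb p π E ∧ IsNormal π E)) := by
    ext E; simp
  rw [NE, hset, Set.ncard_coe_finset]

lemma sum_NE_zero {z : PermPat} (j : Fin n)
    (hj : ∀ S, EhatMem z π S → j ∉ S) :
    ∑ w : Below π, (if PatLe z w.1 then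
      ((-1 : ℤ) ^ (n - w.1.1) * (NE w.1 π : ℤ)) else 0) = 0 := by
  classical
  set F := Finset.univ.filter (fun E : Finset (Fin n) =>
      (∀ m, Linked π m → m ∈ E) ∧ PatLe z (patternOf π E)) with hF
  have hsplit : ∀ w : Below π, (if PatLe z w.1 then
      ((-1 : ℤ) ^ (n - w.1.1) * (NE w.1 π : ℤ)) else 0)
      = ∑ E ∈ F.filter (fun E =>
          (⟨patternOf π E, patternOf_le_top π E⟩ : Below π) = w),
          (-1 : ℤ) ^ (n - E.card) := by
    intro w
    have hfib : ∀ E ∈ F.filter (fun E =>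
        (⟨patternOf π E, patternOf_le_top π E⟩ : Below π) = w),
        patternOf π E = w.1 := by
      intro E hE
      exact congrArg Subtype.val (Finset.mem_filter.mp hE).2
    have hconst : ∀ E ∈ F.filter (fun E =>
        (⟨patternOf π E, patternOf_le_top π E⟩ : Below π) = w),
        ((-1 : ℤ) ^ (n - E.card)) = (-1 : ℤ) ^ (n - w.1.1) := by
      intro E hE
      have hc : E.card = w.1.1 := congrArg Sigma.fst (hfib E hE)
      rw [hc]
    rw [Finset.sum_congr rfl hconst, Finset.sum_const, nsmul_eq_mul]
    by_cases hzw : PatLe z w.1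
    · simp only [hzw, if_true]
      rw [mul_comm]
      congr 1
      have hsets : F.filter (fun E =>
          (⟨patternOf π E, patternOf_le_top π E⟩ : Below π) = w)
          = Finset.univ.filter
            (fun E : Finset (Fin n) => IsEmb w.1 π E ∧ IsNormal π E) := by
        ext E
        simp only [Finset.mem_filter, Finset.mem_univ, true_and, hF]
        constructor
        · rintro ⟨⟨hT, hzE⟩, hpat⟩
          exact ⟨congrArg Subtype.val hpat, fun m hm => hT m hm⟩
        · rintro ⟨hemb, hnorm⟩
          have hpe : patternOf π E = w.1 := hemb
          refine ⟨⟨fun m hm => hnorm m hm, by rw [hpe]; exact hzw⟩, ?_⟩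
          exact Subtype.ext hpe
      rw [hsets, NE_eq_card]
    · simp only [hzw, if_false]
      have hempty : F.filter (fun E =>
          (⟨patternOf π E, patternOf_le_top π E⟩ : Below π) = w) = ∅ := by
        rw [Finset.eq_empty_iff_forall_notMem]
        intro E hE
        have hzE := ((Finset.mem_filter.mp (Finset.mem_filter.mp hE).1).2).2
        rw [hfib E hE] at hzE
        exact hzw hzE
      rw [hempty]
      simp
  calc ∑ w : Below π, (if PatLe z w.1 then
        ((-1 : ℤ) ^ (n - w.1.1) * (NE w.1 π : ℤ)) else 0)
      = ∑ w : Below π, ∑ E ∈ F.filter (fun E =>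
          (⟨patternOf π E, patternOf_le_top π E⟩ : Below π) = w),
          (-1 : ℤ) ^ (n - E.card) := Finset.sum_congr rfl (fun w _ => hsplit w)
    _ = ∑ E ∈ F, (-1 : ℤ) ^ (n - E.card) := Finset.sum_fiberwise F _ _
    _ = 0 := sum_F_zero π j hj

end Below

/-! ### Möbius function basics and the matrix argument -/

lemma permMu_self (p : PermPat) : permMu p p = 1 := by rw [permMu]; simp

lemma permMu_eq_zero {p q : PermPat} (h : ¬ PatLe p q) : permMu p q = 0 := by
  rw [permMu]
  rw [if_neg (fun hc : p = q => h (hc ▸ patLe_refl p)), if_neg h]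

lemma patLe_of_permMu_ne {p q : PermPat} (h : permMu p q ≠ 0) : PatLe p q := by
  by_contra hc
  exact h (permMu_eq_zero hc)

lemma permMu_rec {p q : PermPat} (hne : p ≠ q) (hle : PatLe p q) :
    permMu p q = - ∑ m : Fin q.1, ∑ z : Equiv.Perm (Fin m.1),
        if PatLe p ⟨m.1, z⟩ ∧ PatLe ⟨m.1, z⟩ q then permMu p ⟨m.1, z⟩ else 0 := by
  rw [permMu, if_neg hne, if_pos hle]

/-- Auxiliary summand. -/
noncomputable def Hfun (p q r : PermPat) : ℤ :=
  if PatLe p r ∧ PatLe r q ∧ r ≠ q then permMu p r else 0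

section Matrices
variable {n : ℕ} (π : Equiv.Perm (Fin n))

lemma mu_row (p q : PermPat) (hq : PatLe q ⟨n, π⟩) :
    ∑ w : Below π, permMu p w.1 * (if PatLe w.1 q then (1 : ℤ) else 0)
      = (if p = q then 1 else 0) := by
  classical
  by_cases hpq : p = q
  · subst hpq
    rw [if_pos rfl]
    rw [Finset.sum_eq_single (⟨p, hq⟩ : Below π)]
    · simp [permMu_self, patLe_refl]
    · intro w _ hw
      by_cases hle : PatLe w.1 p
      · by_cases hz : permMu p w.1 = 0
        · rw [hz, zero_mul]
        · exact absurd (Subtype.ext (patLe_antisymm hle (patLe_of_permMu_ne hz))) hw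
      · rw [if_neg hle, mul_zero]
    · intro h
      exact absurd (Finset.mem_univ _) h
  · rw [if_neg hpq]
    by_cases hple : PatLe p q
    · -- main case
      set w0 : Below π := ⟨q, hq⟩ with hw0
      rw [← Finset.add_sum_erase _ _ (Finset.mem_univ w0)]
      have hterm0 : permMu p w0.1 * (if PatLe w0.1 q then (1 : ℤ) else 0)
          = permMu p q := by
        rw [hw0]
        simp [patLe_refl]
      rw [hterm0, permMu_rec hpq hple, neg_add_eq_zero]
      have hstep2 : ∀ (m : Fin q.1) (z : Equiv.Perm (Fin m.1)),
          (if PatLe p ⟨m.1, z⟩ ∧ PatLe ⟨m.1, z⟩ q then permMu p ⟨m.1, z⟩ else 0)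
            = Hfun p q ⟨m.1, z⟩ := by
        intro m z
        have hne : (⟨m.1, z⟩ : PermPat) ≠ q := by
          intro hc
          have h1 : m.1 = q.1 := congrArg Sigma.fst hc
          have := m.isLt
          omega
        unfold Hfun
        by_cases hcond : PatLe p ⟨m.1, z⟩ ∧ PatLe ⟨m.1, z⟩ q
        · rw [if_pos hcond, if_pos ⟨hcond.1, hcond.2, hne⟩]
        · rw [if_neg hcond, if_neg (fun hc => hcond ⟨hc.1, hc.2.1⟩)]
      have hstep1 : ∀ w ∈ Finset.univ.erase w0,
          Hfun p q w.1 = permMu p w.1 * (if PatLe w.1 q then (1 : ℤ) else 0) := by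
        intro w hw
        have hwne : w.1 ≠ q := fun hc =>
          (Finset.ne_of_mem_erase hw) (Subtype.ext hc)
        unfold Hfun
        by_cases hle : PatLe w.1 q
        · by_cases hz : permMu p w.1 = 0
          · simp [hz]
          · rw [if_pos ⟨patLe_of_permMu_ne hz, hle, hwne⟩, if_pos hle, mul_one]
        · rw [if_neg (fun hcond => hle hcond.2.1), if_neg hle, mul_zero]
      have hRsub : (Finset.univ.sigma
            (fun m : Fin q.1 => (Finset.univ : Finset (Equiv.Perm (Fin m.1))))).filter
          (fun x : Σ m : Fin q.1, Equiv.Perm (Fin m.1) => PatLe ⟨x.1.1, x.2⟩ ⟨n, π⟩)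
          ⊆ Finset.univ.sigma (fun m : Fin q.1 => (Finset.univ : Finset (Equiv.Perm (Fin m.1)))) := Finset.filter_subset _ _
      calc ∑ m : Fin q.1, ∑ z : Equiv.Perm (Fin m.1),
            (if PatLe p ⟨m.1, z⟩ ∧ PatLe ⟨m.1, z⟩ q then permMu p ⟨m.1, z⟩ else 0)
          = ∑ m : Fin q.1, ∑ z : Equiv.Perm (Fin m.1), Hfun p q ⟨m.1, z⟩ :=
            Finset.sum_congr rfl (fun m _ =>
              Finset.sum_congr rfl (fun z _ => hstep2 m z))
        _ = ∑ x ∈ Finset.univ.sigma (fun m : Fin q.1 => (Finset.univ : Finset (Equiv.Perm (Fin m.1)))),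
              Hfun p q ⟨x.1.1, x.2⟩ :=
            Finset.sum_sigma' Finset.univ (fun _ => Finset.univ)
              (fun (m : Fin q.1) (z : Equiv.Perm (Fin m.1)) => Hfun p q ⟨m.1, z⟩)
        _ = ∑ x ∈ (Finset.univ.sigma (fun m : Fin q.1 => (Finset.univ : Finset (Equiv.Perm (Fin m.1))))).filter
              (fun x : Σ m : Fin q.1, Equiv.Perm (Fin m.1) => PatLe ⟨x.1.1, x.2⟩ ⟨n, π⟩),
              Hfun p q ⟨x.1.1, x.2⟩ := by
            refine (Finset.sum_subset hRsub ?_).symm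
            intro x hx hnx
            unfold Hfun
            apply if_neg
            rintro ⟨h1, h2, h3⟩
            exact absurd (Finset.mem_filter.mpr ⟨hx, patLe_trans h2 hq⟩) hnx
        _ = ∑ w ∈ (Finset.univ.erase w0).filter (fun w : Below π => w.1.1 < q.1),
              Hfun p q w.1 := by
            apply Finset.sum_bij (fun (x : Σ m : Fin q.1, Equiv.Perm (Fin m.1))
              (hx : x ∈ (Finset.univ.sigma (fun m : Fin q.1 => (Finset.univ : Finset (Equiv.Perm (Fin m.1))))).filter
                (fun x : Σ m : Fin q.1, Equiv.Perm (Fin m.1) => PatLe ⟨x.1.1, x.2⟩ ⟨n, π⟩)) =>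
              (⟨⟨x.1.1, x.2⟩, (Finset.mem_filter.mp hx).2⟩ : Below π))
            · intro x hx
              refine Finset.mem_filter.mpr ⟨?_, ?_⟩
              · apply Finset.mem_erase.mpr
                refine ⟨?_, Finset.mem_univ _⟩
                intro hc
                have hlen : x.1.1 = q.1 :=
                  congrArg (fun y : PermPat => y.1) (congrArg Subtype.val hc)
                have := x.1.isLt
                omega
              · exact x.1.isLt
            · intro a ha b hb hab
              have hval := congrArg Subtype.val hab
              have h1 : a.1.1 = b.1.1 := congrArg Sigma.fst hval
              have h3 : HEq a.2 b.2 := congr_arg_heq (fun s => s.2) hval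
              exact Sigma.ext (Fin.ext h1) h3
            · intro w hw
              obtain ⟨hw1, hw2⟩ := Finset.mem_filter.mp hw
              refine ⟨⟨⟨w.1.1, hw2⟩, w.1.2⟩, ?_, ?_⟩
              · refine Finset.mem_filter.mpr
                  ⟨Finset.mem_sigma.mpr ⟨Finset.mem_univ _, Finset.mem_univ _⟩, w.2⟩
              · exact Subtype.ext rfl
            · intro x hx
              rfl
        _ = ∑ w ∈ Finset.univ.erase w0, Hfun p q w.1 := by
            apply Finset.sum_subset (Finset.filter_subset _ _)
            intro w hw hnw
            unfold Hfun
            apply if_neg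
            rintro ⟨h1, h2, h3⟩
            exact hnw (Finset.mem_filter.mpr ⟨hw, patLe_len_lt h2 h3⟩)
        _ = ∑ w ∈ Finset.univ.erase w0,
              permMu p w.1 * (if PatLe w.1 q then (1 : ℤ) else 0) :=
            Finset.sum_congr rfl hstep1
    · -- p not below q : all terms vanish
      apply Finset.sum_eq_zero
      intro w _
      by_cases hle : PatLe w.1 q
      · by_cases hz : permMu p w.1 = 0
        · rw [hz, zero_mul]
        · exact absurd (patLe_trans (patLe_of_permMu_ne hz) hle) hple
      · rw [if_neg hle, mul_zero]

end Matrices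

/-! ### Final assembly -/

section Final
variable {n : ℕ} (π : Equiv.Perm (Fin n))

noncomputable def muMat : Matrix (Below π) (Below π) ℤ :=
  fun p q => permMu p.1 q.1

noncomputable def zMat : Matrix (Below π) (Below π) ℤ :=
  fun p q => if PatLe p.1 q.1 then 1 else 0

lemma muMat_mul_zMat : muMat π * zMat π = 1 := by
  ext p q
  rw [Matrix.mul_apply, Matrix.one_apply]
  calc ∑ w : Below π, muMat π p w * zMat π w q
      = ∑ w : Below π, permMu p.1 w.1 * (if PatLe w.1 q.1 then (1 : ℤ) else 0) := by
        apply Finset.sum_congr rfl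
        intro w _
        simp only [muMat, zMat]
    _ = if p.1 = q.1 then 1 else 0 := mu_row π p.1 q.1 q.2
    _ = if p = q then 1 else 0 := by
        by_cases hc : p = q
        · rw [if_pos (congrArg Subtype.val hc), if_pos hc]
        · rw [if_neg (fun h => hc (Subtype.ext h)), if_neg hc]

lemma col_sum (p : Below π) (hp : p.1 ≠ ⟨n, π⟩) :
    ∑ w : Below π, (if PatLe p.1 w.1 then (1 : ℤ) else 0) * permMu w.1 ⟨n, π⟩ = 0 := by
  have hZA : zMat π * muMat π = 1 := mul_eq_one_comm.mp (muMat_mul_zMat π)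
  set top : Below π := ⟨⟨n, π⟩, patLe_refl _⟩ with htop
  have h2 : (zMat π * muMat π) p top = (1 : Matrix (Below π) (Below π) ℤ) p top := by
    rw [hZA]
  rw [Matrix.mul_apply, Matrix.one_apply,
    if_neg (fun hc : p = top => hp (congrArg Subtype.val hc))] at h2
  calc ∑ w : Below π, (if PatLe p.1 w.1 then (1 : ℤ) else 0) * permMu w.1 ⟨n, π⟩
      = ∑ w : Below π, zMat π p w * muMat π w top := by
        apply Finset.sum_congr rfl
        intro w _
        simp only [muMat, zMat, htop]
    _ = 0 := h2

lemma NE_top : NE ⟨n, π⟩ π = 1 := by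
  rw [NE_eq_card]
  have hset : Finset.univ.filter
      (fun E : Finset (Fin n) => IsEmb ⟨n, π⟩ π E ∧ IsNormal π E)
      = {Finset.univ} := by
    ext E
    simp only [Finset.mem_filter, Finset.mem_univ, true_and, Finset.mem_singleton]
    constructor
    · rintro ⟨hemb, -⟩
      have hc : E.card = n := congrArg Sigma.fst hemb
      exact Finset.eq_univ_of_card E (by rw [hc]; exact (Fintype.card_fin n).symm)
    · rintro rfl
      exact ⟨patternOf_univ π, fun m _ => Finset.mem_univ m⟩
  rw [hset, Finset.card_singleton]

lemma mobius_single_aux {k : ℕ} (σ : Equiv.Perm (Fin k))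
    (hsingle : ∀ p : PermPat, PatLe ⟨k, σ⟩ p → PatLe p ⟨n, π⟩ → p ≠ ⟨n, π⟩ →
      ∃ j : Fin n, ∀ E : Finset (Fin n), EhatMem p π E → j ∉ E) :
    ∀ (d : ℕ) (z : PermPat), PatLe z ⟨n, π⟩ → PatLe ⟨k, σ⟩ z → n - z.1 ≤ d →
      permMu z ⟨n, π⟩ = (-1 : ℤ) ^ (n - z.1) * (NE z π : ℤ) := by
  intro d
  induction d with
  | zero =>
    intro z hz hσz hd
    have hzn : z.1 = n := le_antisymm hz.len_le (by omega)
    have hz' : z = ⟨n, π⟩ := patLe_eq_of_len hz (by rw [hzn])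
    rw [hz', permMu_self, NE_top]
    have : n - (⟨n, π⟩ : PermPat).1 = 0 := by simp
    rw [this]
    simp
  | succ d ih =>
    intro z hz hσz hd
    by_cases hztop : z = ⟨n, π⟩
    · rw [hztop, permMu_self, NE_top]
      have : n - (⟨n, π⟩ : PermPat).1 = 0 := by simp
      rw [this]
      simp
    · obtain ⟨j, hj⟩ := hsingle z hσz hz hztop
      have hNE := sum_NE_zero π j hj
      have hcol := col_sum π ⟨z, hz⟩ hztop
      set w0 : Below π := ⟨z, hz⟩ with hw0
      rw [← Finset.add_sum_erase _ _ (Finset.mem_univ w0)] at hNE hcol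
      have hterms : ∀ w ∈ Finset.univ.erase w0,
          (if PatLe z w.1 then (1 : ℤ) else 0) * permMu w.1 ⟨n, π⟩
          = (if PatLe z w.1 then ((-1 : ℤ) ^ (n - w.1.1) * (NE w.1 π : ℤ)) else 0) := by
        intro w hw
        by_cases hzw : PatLe z w.1
        · rw [if_pos hzw, if_pos hzw, one_mul]
          have hne : z ≠ w.1 := fun hc =>
            (Finset.ne_of_mem_erase hw) (Subtype.ext hc.symm)
          have hlt := patLe_len_lt hzw hne
          exact ih w.1 w.2 (patLe_trans hσz hzw) (by omega)
        · rw [if_neg hzw, if_neg hzw, zero_mul]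
      rw [Finset.sum_congr rfl hterms] at hcol
      rw [if_pos (patLe_refl z), one_mul] at hcol
      rw [if_pos (patLe_refl z)] at hNE
      linarith [hcol, hNE]

end Final


/-- If the interval `[σ,π]` is single (i.e. for every `λ` with
`σ ≤ λ < π` there is a letter of `π` belonging to no rightmost embedding of `λ` in `π`),
then `μ(σ,π) = (−1)^{|π|−|σ|}·NE(σ,π)`. -/
theorem mobius_of_single {k n : ℕ} (σ : Equiv.Perm (Fin k)) (π : Equiv.Perm (Fin n))
    (hle : PatLe ⟨k, σ⟩ ⟨n, π⟩)
    (hsingle : ∀ p : PermPat, PatLe ⟨k, σ⟩ p → PatLe p ⟨n, π⟩ → p ≠ ⟨n, π⟩ →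
      ∃ j : Fin n, ∀ E : Finset (Fin n), EhatMem p π E → j ∉ E) :
    permMu ⟨k, σ⟩ ⟨n, π⟩ = (-1 : ℤ) ^ (n - k) * (NE ⟨k, σ⟩ π : ℤ) := by
  exact mobius_single_aux π σ hsingle (n - k) ⟨k, σ⟩ hle (patLe_refl _) (le_refl _)
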